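/- Let a ≥ 0, γ ∈ 𝕋, and let ρ be a finite positive measure on the unit circle 𝕋 with ρ({1}) = 0 and ∫(1 - Re s) dρ(s) < ∞. Define, for n ∈ ℤ, f(n) = γ^n · exp(-(a/2)n² + ∫_𝕋 (s^n - 1 - i n Im s) dρ(s)). Then lim_{n→∞} |f(n)|^{1/n²} = e^{-a/2}. -/

import Mathlib

open Real Complex MeasureTheory Filter Topology

lemma aux_norm_one_sub_pow_le (s : ℂ) (hs : ‖s‖ = 1) (n : ℕ) :
    ‖1 - s ^ n‖ ≤ n * ‖1 - s‖ := by
  induction n with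
  | zero => simp
  | succ n ih =>
    have h : 1 - s ^ (n + 1) = (1 - s ^ n) + s ^ n * (1 - s) := by ring
    rw [h]
    calc ‖(1 - s ^ n) + s ^ n * (1 - s)‖ ≤ ‖1 - s ^ n‖ + ‖s ^ n * (1 - s)‖ :=
          norm_add_le _ _
    _ ≤ n * ‖1 - s‖ + ‖1 - s‖ := by
          rw [norm_mul, norm_pow, hs, one_pow, one_mul]
          exact add_le_add_left ih _
    _ = (n + 1 : ℕ) * ‖1 - s‖ := by push_cast; ring

lemma aux_two_sub (z : ℂ) (hz : ‖z‖ = 1) : 2 - 2 * z.re = ‖1 - z‖ ^ 2 := by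
  have h1 : z.re ^ 2 + z.im ^ 2 = 1 := by
    have := Complex.sq_norm z
    rw [Complex.normSq_apply] at this
    nlinarith [this]
  have h2 : ‖1 - z‖ ^ 2 = (1 - z).re ^ 2 + (1 - z).im ^ 2 := by
    rw [Complex.sq_norm, Complex.normSq_apply]; ring
  simp only [Complex.sub_re, Complex.sub_im, Complex.one_re, Complex.one_im] at h2
  nlinarith [h1, h2]

lemma aux_re_pow (s : ℂ) (hs : ‖s‖ = 1) (n : ℕ) :
    1 - (s ^ n).re ≤ (n : ℝ) ^ 2 * (1 - s.re) := by
  have hsn : ‖s ^ n‖ = 1 := by rw [norm_pow, hs, one_pow]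
  have k1 := aux_two_sub s hs
  have k2 := aux_two_sub (s ^ n) hsn
  have hb := aux_norm_one_sub_pow_le s hs n
  have hsq : ‖1 - s ^ n‖ ^ 2 ≤ ((n : ℝ) * ‖1 - s‖) ^ 2 := by
    apply sq_le_sq' _ hb
    nlinarith [norm_nonneg (1 - s ^ n)]
  nlinarith [hsq, k1, k2]

theorem stmt_12 (a : ℝ) (ha : 0 ≤ a) (γ : ℂ) (hγ : ‖γ‖ = 1)
    (ρ : Measure ℂ) [IsFiniteMeasure ρ]
    (hcircle : ∀ᵐ s ∂ρ, ‖s‖ = 1)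
    (hone : ρ {1} = 0)
    (hint : Integrable (fun s : ℂ => 1 - s.re) ρ)
    (f : ℕ → ℂ)
    (hf : ∀ n : ℕ, f n = γ ^ n *
      Complex.exp (-((a : ℂ) / 2) * (n : ℂ) ^ 2 +
        ∫ s : ℂ, (s ^ n - 1 - Complex.I * (n : ℂ) * (s.im : ℂ)) ∂ρ)) :
    Tendsto (fun n : ℕ => ‖f n‖ ^ (((n : ℝ) ^ 2)⁻¹)) atTop (𝓝 (Real.exp (-a / 2))) := by
  -- integrability of the complex integrand
  have hInt : ∀ n : ℕ,
      Integrable (fun s : ℂ => s ^ n - 1 - Complex.I * (n : ℂ) * (s.im : ℂ)) ρ := by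
    intro n
    apply Integrable.mono' (integrable_const ((2 : ℝ) + n))
    · exact Continuous.aestronglyMeasurable (by continuity)
    · filter_upwards [hcircle] with s hs
      have h1 : ‖s ^ n - 1 - Complex.I * (n : ℂ) * (s.im : ℂ)‖ ≤
          ‖s ^ n - 1‖ + ‖Complex.I * (n : ℂ) * (s.im : ℂ)‖ := norm_sub_le _ _
      have h2 : ‖s ^ n - 1‖ ≤ ‖s ^ n‖ + ‖(1 : ℂ)‖ := norm_sub_le _ _
      have h3 : ‖Complex.I * (n : ℂ) * (s.im : ℂ)‖ = n * |s.im| := by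
        simp [norm_mul, Complex.norm_real]
      have h4 : |s.im| ≤ 1 := by
        have := Complex.abs_im_le_norm s
        rwa [hs] at this
      have h5 : ‖s ^ n‖ = 1 := by rw [norm_pow, hs, one_pow]
      have h6 : (n : ℝ) * |s.im| ≤ n * 1 :=
        mul_le_mul_of_nonneg_left h4 (Nat.cast_nonneg n)
      simp only [norm_one] at h2
      rw [h3] at h1
      linarith
  -- norm formula
  have hnorm : ∀ n : ℕ, ‖f n‖ =
      Real.exp (-(a / 2) * (n : ℝ) ^ 2 + ∫ s : ℂ, ((s ^ n).re - 1) ∂ρ) := by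
    intro n
    rw [hf n, norm_mul, norm_pow, hγ, one_pow, one_mul]
    rw [Complex.norm_exp]
    congr 1
    rw [Complex.add_re]
    congr 1
    · have hc : (-((a : ℂ) / 2) * (n : ℂ) ^ 2) = ((-(a / 2) * (n : ℝ) ^ 2 : ℝ) : ℂ) := by
        push_cast; ring
      rw [hc, Complex.ofReal_re]
    · have := integral_re (hInt n)
      simp only [RCLike.re_to_complex] at this
      rw [← this]
      congr 1
      ext s
      simp [Complex.sub_re, Complex.mul_re, Complex.mul_im]
  -- dominated convergence
  have hT : Tendsto (fun n : ℕ => ∫ s : ℂ, (((s ^ n).re - 1) / (n : ℝ) ^ 2) ∂ρ)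
      atTop (𝓝 0) := by
    have h0 : (0 : ℝ) = ∫ _ : ℂ, (0 : ℝ) ∂ρ := by simp
    rw [h0]
    apply tendsto_integral_of_dominated_convergence (fun s => 1 - s.re)
    · intro n
      exact Continuous.aestronglyMeasurable
        (((Complex.continuous_re.comp (continuous_pow n)).sub continuous_const).div_const _)
    · exact hint
    · intro n
      filter_upwards [hcircle] with s hs
      have hres : s.re ≤ 1 := by
        have := Complex.re_le_norm s
        rw [hs] at this
        linarith
      have hre : (s ^ n).re ≤ 1 := by
        have := Complex.re_le_norm (s ^ n)
        rw [norm_pow, hs, one_pow] at this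
        linarith
      rcases Nat.eq_zero_or_pos n with h | h
      · subst h
        norm_num
        linarith
      · have hn2 : (0:ℝ) < (n : ℝ) ^ 2 := by positivity
        rw [Real.norm_eq_abs, abs_div, abs_of_pos hn2, div_le_iff₀ hn2]
        rw [abs_of_nonpos (by linarith : (s ^ n).re - 1 ≤ 0)]
        have := aux_re_pow s hs n
        nlinarith
    · filter_upwards [hcircle] with s hs
      apply squeeze_zero_norm' (a := fun n : ℕ => 2 / (n : ℝ) ^ 2)
      · filter_upwards [eventually_ge_atTop 1] with n hn
        have hn2 : (0:ℝ) < (n : ℝ) ^ 2 := by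
          have : (1:ℝ) ≤ n := by exact_mod_cast hn
          positivity
        rw [Real.norm_eq_abs, abs_div, abs_of_pos hn2, div_le_div_iff_of_pos_right hn2]
        have h5 : ‖s ^ n‖ = 1 := by rw [norm_pow, hs, one_pow]
        have hx : |(s ^ n).re| ≤ 1 := by
          have := Complex.abs_re_le_norm (s ^ n)
          rwa [h5] at this
        rcases abs_le.1 hx with ⟨ha1, ha2⟩
        rw [abs_le]
        constructor <;> linarith
      · have h1 : Tendsto (fun n : ℕ => ((n : ℝ) ^ 2)) atTop atTop :=
          (tendsto_pow_atTop two_ne_zero).comp (tendsto_natCast_atTop_atTop (R := ℝ))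
        simpa [div_eq_mul_inv] using h1.inv_tendsto_atTop.const_mul (2:ℝ)
  -- assemble
  have heq : ∀ᶠ n : ℕ in atTop,
      Real.exp (-(a / 2) + ∫ s : ℂ, (((s ^ n).re - 1) / (n : ℝ) ^ 2) ∂ρ)
        = ‖f n‖ ^ (((n : ℝ) ^ 2)⁻¹) := by
    filter_upwards [eventually_ge_atTop 1] with n hn
    have hn2 : (0:ℝ) < (n : ℝ) ^ 2 := by
      have : (1:ℝ) ≤ n := by exact_mod_cast hn
      positivity
    rw [hnorm n, ← Real.exp_mul, integral_div]
    congr 1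
    field_simp
  have hlim : Tendsto (fun n : ℕ =>
      Real.exp (-(a / 2) + ∫ s : ℂ, (((s ^ n).re - 1) / (n : ℝ) ^ 2) ∂ρ)) atTop
      (𝓝 (Real.exp (-a / 2))) := by
    have : Tendsto (fun n : ℕ => -(a / 2) + ∫ s : ℂ, (((s ^ n).re - 1) / (n : ℝ) ^ 2) ∂ρ)
        atTop (𝓝 (-(a / 2) + 0)) := tendsto_const_nhds.add hT
    have := (Real.continuous_exp.tendsto _).comp this
    simpa [neg_div, Function.comp_def] using this
  exact hlim.congr' heq
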